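/- Let X be a complex Banach space such that B(X) is stably finite (every one-sided invertible matrix over B(X) is invertible). Then for every m ≥ 1, every Fredholm operator on Xᵐ has index zero, and Xᵐ is not linearly homeomorphic to any of its proper closed finite-codimensional subspaces. -/

import Mathlib

noncomputable section

open Module

/-- A continuous linear map is *strictly singular* if it is not bounded below
on any infinite-dimensional subspace. -/
def IsStrictlySingular {X Y : Type*} [NormedAddCommGroup X] [NormedSpace ℂ X]
    [NormedAddCommGroup Y] [NormedSpace ℂ Y] (T : X →L[ℂ] Y) : Prop :=
  ∀ V : Submodule ℂ X, (∃ c > (0:ℝ), ∀ x ∈ V, c * ‖x‖ ≤ ‖T x‖) → FiniteDimensional ℂ V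

/-- A continuous linear map is *Fredholm* if it has finite-dimensional kernel and
closed range of finite codimension. -/
def IsFredholm {X Y : Type*} [NormedAddCommGroup X] [NormedSpace ℂ X]
    [NormedAddCommGroup Y] [NormedSpace ℂ Y] (T : X →L[ℂ] Y) : Prop :=
  FiniteDimensional ℂ (LinearMap.ker (T : X →ₗ[ℂ] Y)) ∧ IsClosed (LinearMap.range (T : X →ₗ[ℂ] Y) : Set Y) ∧
    FiniteDimensional ℂ (Y ⧸ LinearMap.range (T : X →ₗ[ℂ] Y))

/-- The Fredholm index. -/
def fredholmIndex {X Y : Type*} [NormedAddCommGroup X] [NormedSpace ℂ X]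
    [NormedAddCommGroup Y] [NormedSpace ℂ Y] (T : X →L[ℂ] Y) : ℤ :=
  (finrank ℂ (LinearMap.ker (T : X →ₗ[ℂ] Y)) : ℤ) - (finrank ℂ (Y ⧸ LinearMap.range (T : X →ₗ[ℂ] Y)) : ℤ)

namespace StablyFiniteAux

section Mat

variable {X : Type*} [NormedAddCommGroup X] [NormedSpace ℂ X]

/-- Continuous inclusion of the `j`-th coordinate into `Fin m → X`. -/
def sing (m : ℕ) (j : Fin m) : X →L[ℂ] (Fin m → X) :=
  ContinuousLinearMap.pi (fun i => if i = j then ContinuousLinearMap.id ℂ X else 0)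

lemma sing_apply (m : ℕ) (j : Fin m) (x : X) (i : Fin m) :
    sing m j x i = if i = j then x else 0 := by
  simp [sing, apply_ite (fun f : X →L[ℂ] X => f x)]

lemma sum_sing (m : ℕ) (v : Fin m → X) : ∑ j, sing m j (v j) = v := by
  funext i
  simp [Finset.sum_apply, sing_apply]

/-- The matrix of an operator on `Fin m → X`. -/
def toMat (m : ℕ) (A : (Fin m → X) →L[ℂ] (Fin m → X)) :
    Matrix (Fin m) (Fin m) (X →L[ℂ] X) :=
  fun i j => (ContinuousLinearMap.proj i).comp (A.comp (sing m j))

lemma toMat_apply (m : ℕ) (A : (Fin m → X) →L[ℂ] (Fin m → X)) (i j : Fin m) (x : X) :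
    toMat m A i j x = A (sing m j x) i := rfl

lemma apply_eq_sum (m : ℕ) (A : (Fin m → X) →L[ℂ] (Fin m → X)) (v : Fin m → X) (i : Fin m) :
    A v i = ∑ j, toMat m A i j (v j) := by
  conv_lhs => rw [← sum_sing m v, map_sum]
  simp [Finset.sum_apply, toMat_apply]

lemma toMat_mul (m : ℕ) (A B : (Fin m → X) →L[ℂ] (Fin m → X)) :
    toMat m (A.comp B) = toMat m A * toMat m B := by
  funext i j
  apply ContinuousLinearMap.ext
  intro x
  rw [Matrix.mul_apply]
  rw [ContinuousLinearMap.sum_apply]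
  simp only [ContinuousLinearMap.mul_apply]
  rw [toMat_apply]
  simp only [ContinuousLinearMap.comp_apply]
  rw [apply_eq_sum m A (B (sing m j x)) i]
  exact Finset.sum_congr rfl fun k _ => rfl

lemma toMat_id (m : ℕ) : toMat m (ContinuousLinearMap.id ℂ (Fin m → X)) = 1 := by
  funext i j
  apply ContinuousLinearMap.ext
  intro x
  rw [Matrix.one_apply]
  by_cases h : i = j <;>
    simp [toMat_apply, sing_apply, h, apply_ite (fun f : X →L[ℂ] X => f x)]

lemma toMat_inj (m : ℕ) (A B : (Fin m → X) →L[ℂ] (Fin m → X))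
    (h : toMat m A = toMat m B) : A = B := by
  apply ContinuousLinearMap.ext
  intro v
  funext i
  rw [apply_eq_sum, apply_eq_sum, h]

lemma comp_eq_id_of_comp_eq_id
    (hsf : ∀ (n : ℕ) (a b : Matrix (Fin n) (Fin n) (X →L[ℂ] X)), a * b = 1 → b * a = 1)
    (m : ℕ) (A B : (Fin m → X) →L[ℂ] (Fin m → X))
    (h : A.comp B = ContinuousLinearMap.id ℂ (Fin m → X)) :
    B.comp A = ContinuousLinearMap.id ℂ (Fin m → X) := by
  have h1 : toMat m A * toMat m B = 1 := by rw [← toMat_mul, h, toMat_id]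
  have h2 := hsf m _ _ h1
  apply toMat_inj
  rw [toMat_mul, h2, toMat_id]


end Mat

section Main

variable {Y : Type*} [NormedAddCommGroup Y] [NormedSpace ℂ Y] [CompleteSpace Y]

lemma no_proper_iso
    (hfin : ∀ A B : Y →L[ℂ] Y, A.comp B = ContinuousLinearMap.id ℂ Y →
      B.comp A = ContinuousLinearMap.id ℂ Y)
    (W : Submodule ℂ Y) (hWc : IsClosed (W : Set Y)) (hne : W ≠ ⊤)
    (hfd : FiniteDimensional ℂ (Y ⧸ W)) : ¬ Nonempty (Y ≃L[ℂ] W) := by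
  rintro ⟨e⟩
  obtain ⟨f, hf⟩ := Submodule.ClosedComplemented.of_quotient_finiteDimensional hWc
  set T : Y →L[ℂ] Y := W.subtypeL.comp (e : Y →L[ℂ] W) with hT
  set R : Y →L[ℂ] Y := (e.symm : W →L[ℂ] Y).comp f with hR
  have hRT : R.comp T = ContinuousLinearMap.id ℂ Y := by
    apply ContinuousLinearMap.ext
    intro y
    show e.symm (f ((e y : Y))) = y
    rw [hf (e y)]
    exact e.symm_apply_apply y
  have hTR := hfin R T hRT
  apply hne
  rw [eq_top_iff]
  intro y _
  have h1 : T (R y) = y := ContinuousLinearMap.ext_iff.mp hTR y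
  have h2 : T (R y) ∈ W := (e (R y)).2
  rwa [h1] at h2


lemma exists_inj_map (K F : Type*) [AddCommGroup K] [Module ℂ K] [AddCommGroup F] [Module ℂ F]
    [FiniteDimensional ℂ K] [FiniteDimensional ℂ F] (h : finrank ℂ K ≤ finrank ℂ F) :
    ∃ u : K →ₗ[ℂ] F, Function.Injective u := by
  rcases Nat.eq_zero_or_pos (finrank ℂ K) with hk | hk
  · have : Subsingleton K := Module.finrank_zero_iff.mp hk
    exact ⟨0, fun a b _ => Subsingleton.elim a b⟩
  · set k := finrank ℂ K
    set c := finrank ℂ F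
    have hg : ∃ g : Fin c → Fin k, Function.Surjective g := by
      refine ⟨fun i => if h2 : (i : ℕ) < k then ⟨i, h2⟩ else ⟨0, hk⟩, fun j => ?_⟩
      refine ⟨⟨(j : ℕ), lt_of_lt_of_le j.2 h⟩, ?_⟩
      simp [j.2]
    obtain ⟨g, hg⟩ := hg
    refine ⟨((Module.finBasis ℂ F).equivFun.symm.toLinearMap.comp
      (LinearMap.funLeft ℂ ℂ g)).comp (Module.finBasis ℂ K).equivFun.toLinearMap, ?_⟩
    exact ((Module.finBasis ℂ F).equivFun.symm.injective.comp
      (LinearMap.funLeft_injective_of_surjective ℂ ℂ g hg)).comp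
      (Module.finBasis ℂ K).equivFun.injective

lemma exists_surj_map (K F : Type*) [AddCommGroup K] [Module ℂ K] [AddCommGroup F] [Module ℂ F]
    [FiniteDimensional ℂ K] [FiniteDimensional ℂ F] (h : finrank ℂ F ≤ finrank ℂ K) :
    ∃ u : K →ₗ[ℂ] F, Function.Surjective u := by
  set g : Fin (finrank ℂ F) → Fin (finrank ℂ K) := Fin.castLE h
  refine ⟨((Module.finBasis ℂ F).equivFun.symm.toLinearMap.comp
    (LinearMap.funLeft ℂ ℂ g)).comp (Module.finBasis ℂ K).equivFun.toLinearMap, ?_⟩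
  exact (((Module.finBasis ℂ F).equivFun.symm.surjective.comp
    (LinearMap.funLeft_surjective_of_injective ℂ ℂ g (Fin.castLE_injective h))).comp
    (Module.finBasis ℂ K).equivFun.surjective)

lemma index_zero
    (hfin : ∀ A B : Y →L[ℂ] Y, A.comp B = ContinuousLinearMap.id ℂ Y →
      B.comp A = ContinuousLinearMap.id ℂ Y)
    (T : Y →L[ℂ] Y) (hT : IsFredholm T) : fredholmIndex T = 0 := by
  obtain ⟨hker, hclosed, hcoker⟩ := hT
  haveI := hker; haveI := hcoker
  by_contra hind
  set K := LinearMap.ker (T : Y →ₗ[ℂ] Y) with hK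
  set Rg := LinearMap.range (T : Y →ₗ[ℂ] Y) with hRg
  -- projection onto the range
  obtain ⟨q, hq⟩ := Submodule.ClosedComplemented.of_quotient_finiteDimensional (p := Rg) hclosed
  set Pl : Y →L[ℂ] Y := Rg.subtypeL.comp q with hPl
  have hPl_mem : ∀ y, Pl y ∈ Rg := fun y => (q y).2
  have hPl_fix : ∀ y ∈ Rg, Pl y = y := by
    intro y hy
    have := hq ⟨y, hy⟩
    exact congrArg Subtype.val this
  set F' : Submodule ℂ Y := LinearMap.ker (Pl : Y →ₗ[ℂ] Y) with hF'
  have hF'c : IsClosed (F' : Set Y) := ContinuousLinearMap.isClosed_ker Pl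
  have hRF_bot : Rg ⊓ F' = ⊥ := by
    rw [eq_bot_iff]
    rintro x ⟨hx1, hx2⟩
    have h1 : Pl x = x := hPl_fix x hx1
    have h2 : Pl x = 0 := hx2
    rw [Submodule.mem_bot, ← h1, h2]
  have hmemF' : ∀ y, y - Pl y ∈ F' := by
    intro y
    have : Pl (y - Pl y) = 0 := by
      rw [map_sub, hPl_fix (Pl y) (hPl_mem y), sub_self]
    exact this
  have hRF_top : Rg ⊔ F' = ⊤ := by
    rw [eq_top_iff]
    intro y _
    have h1 : y = Pl y + (y - Pl y) := by abel
    rw [h1]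
    exact Submodule.add_mem_sup (hPl_mem y) (hmemF' y)
  -- F' is isomorphic to the cokernel
  have hφ : Function.Bijective (Rg.mkQ.comp F'.subtype) := by
    constructor
    · rw [← LinearMap.ker_eq_bot, eq_bot_iff]
      intro x hx
      have hx' : (x : Y) ∈ Rg := by
        simpa [Submodule.Quotient.mk_eq_zero] using hx
      have : (x : Y) ∈ Rg ⊓ F' := ⟨hx', x.2⟩
      rw [hRF_bot] at this
      simpa using this
    · intro z
      obtain ⟨y, rfl⟩ := Submodule.mkQ_surjective Rg z
      refine ⟨⟨y - Pl y, hmemF' y⟩, ?_⟩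
      show Submodule.Quotient.mk (y - Pl y) = Submodule.Quotient.mk y
      rw [Submodule.Quotient.eq]
      simpa using Submodule.neg_mem _ (hPl_mem y)
  set eF := LinearEquiv.ofBijective _ hφ with heF
  haveI : FiniteDimensional ℂ F' := Module.Finite.equiv eF.symm
  have hcF : finrank ℂ F' = finrank ℂ (Y ⧸ Rg) := eF.finrank_eq
  -- projection onto the kernel
  obtain ⟨pK, hpK⟩ := Submodule.ClosedComplemented.of_finiteDimensional K
  set k := finrank ℂ K with hk
  set c' := finrank ℂ F' with hc'
  have hkc : k ≠ c' := by
    intro h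
    apply hind
    have : fredholmIndex T = (k : ℤ) - (finrank ℂ (Y ⧸ Rg) : ℤ) := rfl
    rw [this, ← hcF, ← h, sub_self]
  -- shared facts about S := T + u ∘ pK
  have main : ∀ u : K →ₗ[ℂ] Y, (∀ x, u x ∈ F') →
      (LinearMap.range ((T + (LinearMap.toContinuousLinearMap u).comp pK : Y →L[ℂ] Y) : Y →ₗ[ℂ] Y)
          = Rg ⊔ LinearMap.range u)
      ∧ (∀ y, (T + (LinearMap.toContinuousLinearMap u).comp pK) y = 0 →
          T y = 0 ∧ u (pK y) = 0) := by
    intro u hu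
    set S := T + (LinearMap.toContinuousLinearMap u).comp pK with hS
    have hS_apply : ∀ y, S y = T y + u (pK y) := fun y => rfl
    constructor
    · apply le_antisymm
      · rintro _ ⟨y, rfl⟩
        rw [ContinuousLinearMap.coe_coe, hS_apply]
        exact Submodule.add_mem _ (Submodule.mem_sup_left (LinearMap.mem_range_self _ y))
          (Submodule.mem_sup_right (LinearMap.mem_range_self _ (pK y)))
      · apply sup_le
        · rintro _ ⟨z, rfl⟩
          refine ⟨z - (pK z : Y), ?_⟩
          rw [ContinuousLinearMap.coe_coe, ContinuousLinearMap.coe_coe, hS_apply]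
          have h1 : pK (z - (pK z : Y)) = 0 := by
            rw [map_sub, hpK (pK z), sub_self]
          have h2 : T (z - (pK z : Y)) = T z := by
            rw [map_sub]
            have : T ((pK z : Y)) = 0 := (pK z).2
            rw [this, sub_zero]
          rw [h1, h2, map_zero, add_zero]
        · rintro _ ⟨x, rfl⟩
          refine ⟨(x : Y), ?_⟩
          rw [ContinuousLinearMap.coe_coe, hS_apply]
          have h1 : T ((x : Y)) = 0 := x.2
          rw [h1, hpK x, zero_add]
    · intro y hy
      rw [hS_apply] at hy
      have h1 : T y = -(u (pK y)) := eq_neg_of_add_eq_zero_left hy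
      have h2 : T y ∈ Rg ⊓ F' := by
        refine ⟨LinearMap.mem_range_self _ y, ?_⟩
        rw [h1]
        exact Submodule.neg_mem _ (hu (pK y))
      rw [hRF_bot, Submodule.mem_bot] at h2
      refine ⟨h2, ?_⟩
      rw [h2, zero_add] at hy
      exact hy
  rcases hkc.lt_or_gt with hlt | hlt
  · -- negative index : k < c', build injective S with proper closed range
    obtain ⟨u₀, hu₀⟩ := exists_inj_map (↥K) (↥F') (by rw [← hk, ← hc']; exact hlt.le)
    set u : ↥K →ₗ[ℂ] Y := F'.subtype ∘ₗ u₀ with hudef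
    have hu : ∀ x, u x ∈ F' := fun x => (u₀ x).2
    obtain ⟨hrange, hkerS⟩ := main u hu
    set S : Y →L[ℂ] Y := T + (LinearMap.toContinuousLinearMap u).comp pK with hSdef
    have hu_inj : Function.Injective u := F'.injective_subtype.comp hu₀
    have hS_zero : ∀ y, S y = 0 → y = 0 := by
      intro y hy0
      obtain ⟨h1, h2⟩ := hkerS y hy0
      have h3 : pK y = 0 := by
        apply hu_inj
        rw [h2, map_zero]
      have h4 : pK y = ⟨y, h1⟩ := hpK ⟨y, h1⟩
      have h5 : (⟨y, h1⟩ : ↥K) = 0 := by rw [← h4, h3]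
      exact congrArg Subtype.val h5
    have hSinj : Function.Injective S := by
      intro a b hab
      have := hS_zero (a - b) (by rw [map_sub, hab, sub_self])
      exact sub_eq_zero.mp this
    set Gu := LinearMap.range u with hGu
    have hGuF : Gu ≤ F' := by rintro _ ⟨x, rfl⟩; exact hu x
    haveI : FiniteDimensional ℂ Gu := Module.Finite.range u
    have hGuclosed : IsClosed (Gu : Set Y) := Submodule.closed_of_finiteDimensional Gu
    have hsetEq : ((Rg ⊔ Gu : Submodule ℂ Y) : Set Y)
        = (⇑(ContinuousLinearMap.id ℂ Y - Pl)) ⁻¹' (Gu : Set Y) := by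
      ext y
      simp only [Set.mem_preimage, SetLike.mem_coe, ContinuousLinearMap.sub_apply,
        ContinuousLinearMap.id_apply]
      constructor
      · intro hy
        obtain ⟨t, ht, g, hg, rfl⟩ := Submodule.mem_sup.mp hy
        have hPlg : Pl g = 0 := hGuF hg
        have : (t + g) - Pl (t + g) = g := by
          rw [map_add, hPl_fix t ht, hPlg]; abel
        rw [this]; exact hg
      · intro hy
        have h1 : y = Pl y + (y - Pl y) := by abel
        rw [h1]
        exact Submodule.add_mem_sup (hPl_mem y) hy
    have hSclosed : IsClosed ((LinearMap.range (S : Y →ₗ[ℂ] Y) : Submodule ℂ Y) : Set Y) := by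
      rw [hrange, hsetEq]
      exact hGuclosed.preimage (ContinuousLinearMap.continuous _)
    have hfr : finrank ℂ Gu = k := by
      rw [hk]; exact LinearMap.finrank_range_of_inj hu_inj
    have hne : LinearMap.range (S : Y →ₗ[ℂ] Y) ≠ ⊤ := by
      intro htop
      have h1 : Gu ⊔ Rg = ⊤ := by rw [sup_comm, ← hrange]; exact htop
      have hmod : (Gu ⊔ Rg) ⊓ F' = Gu ⊔ (Rg ⊓ F') := sup_inf_assoc_of_le Rg hGuF
      have hFG : F' = Gu := by
        calc F' = ⊤ ⊓ F' := by rw [top_inf_eq]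
        _ = (Gu ⊔ Rg) ⊓ F' := by rw [h1]
        _ = Gu ⊔ (Rg ⊓ F') := hmod
        _ = Gu := by rw [hRF_bot, sup_bot_eq]
      have : c' = k := by rw [hc', hFG, hfr]
      exact hlt.ne this.symm
    have hle : Rg ≤ LinearMap.range (S : Y →ₗ[ℂ] Y) := by rw [hrange]; exact le_sup_left
    haveI hQfd : FiniteDimensional ℂ (Y ⧸ LinearMap.range (S : Y →ₗ[ℂ] Y)) := by
      have hsurj : Function.Surjective
          (Submodule.mapQ Rg (LinearMap.range (S : Y →ₗ[ℂ] Y)) LinearMap.id (by simpa using hle)) := by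
        intro z
        obtain ⟨y, rfl⟩ := Submodule.mkQ_surjective _ z
        exact ⟨Submodule.Quotient.mk y, by simp [Submodule.mapQ_apply, Submodule.mkQ_apply]⟩
      exact Module.Finite.of_surjective _ hsurj
    have hiso : Nonempty (Y ≃L[ℂ] ↥(LinearMap.range (S : Y →ₗ[ℂ] Y))) := by
      refine ⟨S.equivRange hSinj ?_⟩
      have hco : Set.range ⇑S = ((LinearMap.range (S : Y →ₗ[ℂ] Y) : Submodule ℂ Y) : Set Y) := by
        ext y
        simp [LinearMap.mem_range, Set.mem_range, eq_comm]
      rw [hco]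
      exact hSclosed
    exact no_proper_iso hfin _ hSclosed hne hQfd hiso
  · -- positive index : c' < k, build surjective S with nontrivial kernel
    obtain ⟨u₀, hu₀⟩ := exists_surj_map (↥K) (↥F') (by rw [← hk, ← hc']; exact hlt.le)
    set u : ↥K →ₗ[ℂ] Y := F'.subtype ∘ₗ u₀ with hudef
    have hu : ∀ x, u x ∈ F' := fun x => (u₀ x).2
    obtain ⟨hrange, hkerS⟩ := main u hu
    set S : Y →L[ℂ] Y := T + (LinearMap.toContinuousLinearMap u).comp pK with hSdef
    have hranu : LinearMap.range u = F' := by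
      rw [hudef, LinearMap.range_comp, LinearMap.range_eq_top.mpr hu₀, Submodule.map_top,
        Submodule.range_subtype]
    have hSsurj : LinearMap.range (S : Y →ₗ[ℂ] Y) = ⊤ := by rw [hrange, hranu, hRF_top]
    have hkerle : LinearMap.ker (S : Y →ₗ[ℂ] Y) ≤ K := by
      intro y hy
      exact (hkerS y (LinearMap.mem_ker.mp hy)).1
    haveI : FiniteDimensional ℂ (LinearMap.ker (S : Y →ₗ[ℂ] Y)) := Submodule.finiteDimensional_of_le hkerle
    obtain ⟨p', hp'⟩ := Submodule.ClosedComplemented.of_finiteDimensional (LinearMap.ker (S : Y →ₗ[ℂ] Y))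
    set X₁ : Submodule ℂ Y := LinearMap.ker (((LinearMap.ker (S : Y →ₗ[ℂ] Y)).subtypeL.comp p' : Y →L[ℂ] Y) : Y →ₗ[ℂ] Y) with hX₁
    have hX₁c : IsClosed (X₁ : Set Y) := ContinuousLinearMap.isClosed_ker _
    haveI : CompleteSpace X₁ := hX₁c.completeSpace_coe
    set S₁ : ↥X₁ →L[ℂ] Y := S.comp X₁.subtypeL with hS₁
    have hk1 : LinearMap.ker (S₁ : ↥X₁ →ₗ[ℂ] Y) = ⊥ := by
      rw [eq_bot_iff]
      intro x hx
      have hx' : (x : Y) ∈ LinearMap.ker (S : Y →ₗ[ℂ] Y) := LinearMap.mem_ker.mpr (LinearMap.mem_ker.mp hx)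
      have h1 : ((p' (x : Y) : Y)) = 0 := x.2
      have h2 : p' (x : Y) = ⟨(x : Y), hx'⟩ := hp' ⟨(x : Y), hx'⟩
      have h3 : (x : Y) = 0 := by
        have := congrArg Subtype.val h2
        rw [h1] at this
        exact this.symm
      rw [Submodule.mem_bot]
      exact Subtype.ext h3
    have hr1 : LinearMap.range (S₁ : ↥X₁ →ₗ[ℂ] Y) = ⊤ := by
      rw [eq_top_iff]
      intro z _
      obtain ⟨y, hy⟩ := LinearMap.range_eq_top.mp hSsurj z
      have hmem : y - (p' y : Y) ∈ X₁ := by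
        show ((p' (y - (p' y : Y)) : Y)) = 0
        rw [map_sub, hp' (p' y), sub_self, ZeroMemClass.coe_zero]
      refine ⟨⟨y - (p' y : Y), hmem⟩, ?_⟩
      show S (y - (p' y : Y)) = z
      rw [map_sub]
      have : S ((p' y : Y)) = 0 := (p' y).2
      rw [this, sub_zero]; simpa using hy
    set E := ContinuousLinearEquiv.ofBijective S₁ hk1 hr1 with hE
    set R : Y →L[ℂ] Y := X₁.subtypeL.comp (E.symm : Y →L[ℂ] X₁) with hRdef
    have hSR : S.comp R = ContinuousLinearMap.id ℂ Y := by
      apply ContinuousLinearMap.ext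
      intro z
      show S ((E.symm z : X₁) : Y) = z
      have h1 : S ((E.symm z : X₁) : Y) = S₁ (E.symm z) := rfl
      have h2 : S₁ (E.symm z) = E (E.symm z) := rfl
      rw [h1, h2, E.apply_symm_apply]
    have hRS := hfin S R hSR
    -- a nonzero kernel element
    have hrn := LinearMap.finrank_range_add_finrank_ker u₀
    have hrtop : finrank ℂ (LinearMap.range u₀) = c' := by
      rw [LinearMap.range_eq_top.mpr hu₀, finrank_top, hc']
    haveI : Nontrivial (LinearMap.ker u₀) := by
      apply Module.finrank_pos_iff (R := ℂ).mp
      rw [hrtop, ← hk] at hrn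
      omega
    obtain ⟨x₀, hx₀⟩ := exists_ne (0 : LinearMap.ker u₀)
    have hu₀x : u₀ (x₀ : ↥K) = 0 := x₀.2
    have hSx : S (((x₀ : ↥K) : Y)) = 0 := by
      have h1 : S (((x₀ : ↥K) : Y)) = T (((x₀ : ↥K) : Y)) + u (pK (((x₀ : ↥K) : Y))) := rfl
      have h2 : T (((x₀ : ↥K) : Y)) = 0 := (x₀ : ↥K).2
      rw [h1, h2, hpK (x₀ : ↥K), zero_add, hudef]
      show (u₀ (x₀ : ↥K) : Y) = 0
      rw [hu₀x]
      rfl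
    have hinj : (((x₀ : ↥K) : Y)) = 0 := by
      have h1 : R (S (((x₀ : ↥K) : Y))) = (((x₀ : ↥K) : Y)) :=
        ContinuousLinearMap.ext_iff.mp hRS _
      rw [hSx, map_zero] at h1
      exact h1.symm
    apply hx₀
    exact Subtype.ext (Subtype.ext hinj)


end Main

end StablyFiniteAux

/-- If `B(X)` is stably finite, then for every `m ≥ 1` every Fredholm operator on `Xᵐ` has
index zero, and `Xᵐ` is not linearly homeomorphic to any proper closed finite-codimensional
subspace of itself. -/
theorem fredholm_index_zero_of_stably_finite
    {X : Type*} [NormedAddCommGroup X] [NormedSpace ℂ X] [CompleteSpace X]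
    (hsf : ∀ (n : ℕ) (a b : Matrix (Fin n) (Fin n) (X →L[ℂ] X)), a * b = 1 → b * a = 1) :
    (∀ m : ℕ, 1 ≤ m → ∀ T : (Fin m → X) →L[ℂ] (Fin m → X),
        IsFredholm T → fredholmIndex T = 0) ∧
      (∀ m : ℕ, 1 ≤ m → ∀ W : Submodule ℂ (Fin m → X), IsClosed (W : Set (Fin m → X)) →
        W ≠ ⊤ → FiniteDimensional ℂ ((Fin m → X) ⧸ W) →
          ¬ Nonempty ((Fin m → X) ≃L[ℂ] ↥W)) := by
  constructor
  · intro m _ T hT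
    exact StablyFiniteAux.index_zero
      (fun A B h => StablyFiniteAux.comp_eq_id_of_comp_eq_id hsf m A B h) T hT
  · intro m _ W hWc hne hfd
    exact StablyFiniteAux.no_proper_iso
      (fun A B h => StablyFiniteAux.comp_eq_id_of_comp_eq_id hsf m A B h) W hWc hne hfd
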